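/- Let N ≥ 2 be an integer, r > 0 a real number, and k ≥ 0 an integer. Then (r/(1+r)) · (A(r)^k)_{1,N−1} = (r^{(N−1)/2}/N) · (2√r/(1+r))^{k+1} · ∑_{ℓ=1}^{N−1} (−1)^{ℓ+1} · cos^k(ℓπ/N) · sin²(ℓπ/N). -/

import Mathlib

open Real Finset

/-- The `(N−1)×(N−1)` matrix `A(r)` (rows and columns indexed by `{1,…,N−1}`, realized as
`Fin (N-1)` via `m ↦ m+1`) with `A(r)_{i,j} = r/(1+r)` if `j = i+1`, `1/(1+r)` if
`j = i−1`, and `0` otherwise. -/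
noncomputable def Ar (N : ℕ) (r : ℝ) : Matrix (Fin (N - 1)) (Fin (N - 1)) ℝ :=
  fun i j =>
    if (i : ℕ) + 1 = (j : ℕ) then r / (1 + r)
    else if (j : ℕ) + 1 = (i : ℕ) then 1 / (1 + r)
    else 0

lemma sin_add_sin' (x y : ℝ) :
    Real.sin x + Real.sin y = 2 * Real.sin ((x + y) / 2) * Real.cos ((x - y) / 2) := by
  have h := Real.sin_sub_sin x (-y)
  rw [Real.sin_neg, sub_neg_eq_add] at h
  rw [h]; ring_nf

lemma cos_sum_range (N : ℕ) (m : ℕ) (hm0 : 0 < m) (hm : m < 2 * N) :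
    ∑ ℓ ∈ Finset.range N, Real.cos (ℓ * ((m : ℝ) * π / N)) = (1 - (-1 : ℝ) ^ m) / 2 := by
  have hN : 0 < N := by omega
  have hNR : (0:ℝ) < N := by exact_mod_cast hN
  set θ : ℝ := (m : ℝ) * π / N with hθ
  have hs : 0 < Real.sin (θ / 2) := by
    apply Real.sin_pos_of_pos_of_lt_pi
    · rw [hθ]; positivity
    · rw [hθ, div_div, div_lt_iff₀ (by positivity)]
      have h1 : (m:ℝ) < 2 * N := by exact_mod_cast hm
      calc (m:ℝ) * π < (2*N) * π := mul_lt_mul_of_pos_right h1 Real.pi_pos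
        _ = π * (N * 2) := by ring
  have key : ∀ ℓ : ℕ,
      Real.sin (((ℓ:ℝ)+1) * θ - θ/2) - Real.sin (ℓ * θ - θ/2)
        = 2 * Real.sin (θ/2) * Real.cos (ℓ * θ) := by
    intro ℓ
    rw [Real.sin_sub_sin]
    congr 1
    · congr 1; ring
    · congr 1; ring
  have tele := Finset.sum_range_sub (fun ℓ : ℕ => Real.sin (ℓ * θ - θ/2)) N
  have sum_eq : 2 * Real.sin (θ/2) * ∑ ℓ ∈ Finset.range N, Real.cos (ℓ * θ)
      = Real.sin ((N:ℝ) * θ - θ/2) + Real.sin (θ/2) := by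
    rw [Finset.mul_sum]
    have : ∑ ℓ ∈ Finset.range N, 2 * Real.sin (θ/2) * Real.cos (ℓ * θ)
        = ∑ ℓ ∈ Finset.range N,
            (Real.sin (((ℓ:ℝ)+1) * θ - θ/2) - Real.sin (ℓ * θ - θ/2)) := by
      apply Finset.sum_congr rfl
      intro ℓ _
      rw [key ℓ]
    rw [this]
    have : ∑ ℓ ∈ Finset.range N,
            (Real.sin (((ℓ:ℝ)+1) * θ - θ/2) - Real.sin (ℓ * θ - θ/2))
        = Real.sin ((N:ℝ) * θ - θ/2) - Real.sin ((0:ℝ) * θ - θ/2) := by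
      have := Finset.sum_range_sub (fun ℓ : ℕ => Real.sin (ℓ * θ - θ/2)) N
      simpa using this
    rw [this]
    rw [zero_mul, zero_sub, Real.sin_neg]
    ring
  have hNθ : (N:ℝ) * θ = (m:ℝ) * π := by
    rw [hθ]; field_simp
  have h1 : Real.sin ((N:ℝ) * θ - θ/2) = -((-1:ℝ)^m * Real.sin (θ/2)) := by
    rw [hNθ]; exact Real.sin_nat_mul_pi_sub (θ/2) m
  rw [h1] at sum_eq
  have h2s : (2:ℝ) * Real.sin (θ/2) ≠ 0 := by positivity
  apply mul_left_cancel₀ h2s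
  rw [sum_eq]; ring

lemma cos_sum_Icc (N : ℕ) (m : ℕ) (hm0 : 0 < m) (hm : m < 2 * N) :
    ∑ ℓ ∈ Finset.Icc 1 (N-1), Real.cos (ℓ * ((m : ℝ) * π / N))
      = (1 - (-1 : ℝ) ^ m) / 2 - 1 := by
  have hN : 0 < N := by omega
  have h : Finset.Icc 1 (N-1) = Finset.Ico 1 N := by
    rw [← Finset.Ico_add_one_right_eq_Icc]; congr 1; omega
  rw [h, Finset.sum_Ico_eq_sub _ (by omega : 1 ≤ N), cos_sum_range N m hm0 hm]
  simp

lemma sin_orth_le (N : ℕ) (hN : 2 ≤ N) (a b : ℕ) (ha1 : 1 ≤ a)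
    (hb2 : b ≤ N - 1) (hab : a ≤ b) :
    ∑ ℓ ∈ Finset.Icc 1 (N-1),
        Real.sin ((a:ℝ) * (ℓ * π / N)) * Real.sin ((b:ℝ) * (ℓ * π / N))
      = if a = b then (N:ℝ)/2 else 0 := by
  have hterm : ∀ ℓ : ℕ,
      Real.sin ((a:ℝ) * (ℓ * π / N)) * Real.sin ((b:ℝ) * (ℓ * π / N))
        = (Real.cos (ℓ * (((b-a:ℕ):ℝ) * π / N)) - Real.cos (ℓ * (((a+b:ℕ):ℝ) * π / N))) / 2 := by
    intro ℓ
    rw [Real.cos_sub_cos]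
    have e1 : ((ℓ:ℝ) * (((b-a:ℕ):ℝ) * π / N) + (ℓ:ℝ) * (((a+b:ℕ):ℝ) * π / N)) / 2
        = (b:ℝ) * (ℓ * π / N) := by
      push_cast [Nat.cast_sub hab]; ring
    have e2 : ((ℓ:ℝ) * (((b-a:ℕ):ℝ) * π / N) - (ℓ:ℝ) * (((a+b:ℕ):ℝ) * π / N)) / 2
        = -((a:ℝ) * (ℓ * π / N)) := by
      push_cast [Nat.cast_sub hab]; ring
    rw [e1, e2, Real.sin_neg]
    ring
  have hsum : ∑ ℓ ∈ Finset.Icc 1 (N-1),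
      Real.sin ((a:ℝ) * (ℓ * π / N)) * Real.sin ((b:ℝ) * (ℓ * π / N))
      = ((∑ ℓ ∈ Finset.Icc 1 (N-1), Real.cos (ℓ * (((b-a:ℕ):ℝ) * π / N)))
        - ∑ ℓ ∈ Finset.Icc 1 (N-1), Real.cos (ℓ * (((a+b:ℕ):ℝ) * π / N))) / 2 := by
    rw [Finset.sum_congr rfl (fun ℓ _ => hterm ℓ), ← Finset.sum_div,
      Finset.sum_sub_distrib]
  rw [hsum]
  rcases eq_or_lt_of_le hab with heq | hlt
  · subst heq
    rw [if_pos rfl]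
    have h0 : ∑ ℓ ∈ Finset.Icc 1 (N-1), Real.cos (ℓ * (((a-a:ℕ):ℝ) * π / N))
        = (N:ℝ) - 1 := by
      have : ∀ ℓ : ℕ, Real.cos ((ℓ:ℝ) * (((a-a:ℕ):ℝ) * π / N)) = 1 := by
        intro ℓ; simp [Nat.sub_self]
      rw [Finset.sum_congr rfl (fun ℓ _ => this ℓ)]
      rw [Finset.sum_const, Nat.card_Icc]
      have h' : N - 1 + 1 - 1 = N - 1 := by omega
      rw [h', nsmul_eq_mul, mul_one, Nat.cast_sub (show 1 ≤ N by omega), Nat.cast_one]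
    have h1 : ∑ ℓ ∈ Finset.Icc 1 (N-1), Real.cos (ℓ * (((a+a:ℕ):ℝ) * π / N))
        = -1 := by
      rw [cos_sum_Icc N (a+a) (by omega) (by omega)]
      have : (-1:ℝ)^(a+a) = 1 := by
        rw [show a+a = 2*a from by omega, pow_mul]; norm_num
      rw [this]; norm_num
    rw [h0, h1]; ring
  · rw [if_neg (by omega)]
    have hba : 0 < b - a := by omega
    have hba2 : b - a < 2 * N := by omega
    have hab0 : 0 < a + b := by omega
    have hab2 : a + b < 2 * N := by omega
    rw [cos_sum_Icc N (b-a) hba hba2, cos_sum_Icc N (a+b) hab0 hab2]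
    have : (-1:ℝ)^(a+b) = (-1:ℝ)^(b-a) := by
      rw [show a+b = (b-a) + 2*a from by omega, pow_add, pow_mul]
      norm_num
    rw [this]; ring

lemma sin_orth (N : ℕ) (hN : 2 ≤ N) (a b : ℕ) (ha1 : 1 ≤ a) (ha2 : a ≤ N - 1)
    (hb1 : 1 ≤ b) (hb2 : b ≤ N - 1) :
    ∑ ℓ ∈ Finset.Icc 1 (N-1),
        Real.sin ((a:ℝ) * (ℓ * π / N)) * Real.sin ((b:ℝ) * (ℓ * π / N))
      = if a = b then (N:ℝ)/2 else 0 := by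
  rcases le_or_gt a b with hab | hab
  · exact sin_orth_le N hN a b ha1 hb2 hab
  · have h := sin_orth_le N hN b a hb1 ha2 (le_of_lt hab)
    have hcomm : ∑ ℓ ∈ Finset.Icc 1 (N-1),
        Real.sin ((a:ℝ) * (ℓ * π / N)) * Real.sin ((b:ℝ) * (ℓ * π / N))
      = ∑ ℓ ∈ Finset.Icc 1 (N-1),
        Real.sin ((b:ℝ) * (ℓ * π / N)) * Real.sin ((a:ℝ) * (ℓ * π / N)) := by
      apply Finset.sum_congr rfl; intro ℓ _; ring
    rw [hcomm, h]
    have : (b = a) ↔ (a = b) := eq_comm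
    simp only [this]

noncomputable def Ssum (N k a b : ℕ) : ℝ :=
  ∑ ℓ ∈ Finset.Icc 1 (N-1),
    Real.cos (ℓ * π / N) ^ k * (Real.sin ((a:ℝ) * (ℓ * π / N)) * Real.sin ((b:ℝ) * (ℓ * π / N)))

lemma Ssum_zero_right (N k a : ℕ) : Ssum N k a 0 = 0 := by
  unfold Ssum
  apply Finset.sum_eq_zero
  intro ℓ _
  simp

lemma Ssum_N_right (N k a : ℕ) (hN : 0 < N) : Ssum N k a N = 0 := by
  unfold Ssum
  apply Finset.sum_eq_zero
  intro ℓ _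
  have : (N:ℝ) * ((ℓ:ℝ) * π / N) = (ℓ:ℝ) * π := by
    field_simp
  rw [this, Real.sin_nat_mul_pi]
  ring

lemma Ssum_rec (N k a b : ℕ) :
    Ssum N k a b + Ssum N k a (b+2) = 2 * Ssum N (k+1) a (b+1) := by
  unfold Ssum
  rw [← Finset.sum_add_distrib, Finset.mul_sum]
  apply Finset.sum_congr rfl
  intro ℓ _
  have h : Real.sin ((b:ℝ) * (ℓ * π / N)) + Real.sin (((b+2:ℕ):ℝ) * (ℓ * π / N))
      = 2 * Real.sin (((b+1:ℕ):ℝ) * (ℓ * π / N)) * Real.cos (ℓ * π / N) := by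
    rw [add_comm, sin_add_sin']
    have e1 : (((b+2:ℕ):ℝ) * ((ℓ:ℝ) * π / N) + (b:ℝ) * ((ℓ:ℝ) * π / N)) / 2
        = ((b+1:ℕ):ℝ) * ((ℓ:ℝ) * π / N) := by push_cast; ring
    have e2 : (((b+2:ℕ):ℝ) * ((ℓ:ℝ) * π / N) - (b:ℝ) * ((ℓ:ℝ) * π / N)) / 2
        = (ℓ:ℝ) * π / N := by push_cast; ring
    rw [e1, e2]
  linear_combination (Real.cos ((ℓ:ℝ) * π / N)) ^ k * Real.sin ((a:ℝ) * (ℓ * π / N)) * h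

lemma Ssum_orth (N : ℕ) (hN : 2 ≤ N) (a b : ℕ) (ha1 : 1 ≤ a) (ha2 : a ≤ N - 1)
    (hb1 : 1 ≤ b) (hb2 : b ≤ N - 1) :
    Ssum N 0 a b = if a = b then (N:ℝ)/2 else 0 := by
  unfold Ssum
  simp only [pow_zero, one_mul]
  exact sin_orth N hN a b ha1 ha2 hb1 hb2

lemma powA (N : ℕ) (hN : 2 ≤ N) (r : ℝ) (hr : 0 < r) :
    ∀ k : ℕ, ∀ i j : Fin (N-1),
    (Ar N r ^ k) i j = Real.sqrt r ^ (j:ℕ) / Real.sqrt r ^ (i:ℕ) *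
      (2 * Real.sqrt r / (1+r)) ^ k * (2 / N * Ssum N k ((i:ℕ)+1) ((j:ℕ)+1)) := by
  have hs : 0 < Real.sqrt r := Real.sqrt_pos.mpr hr
  have hss : Real.sqrt r * Real.sqrt r = r := Real.mul_self_sqrt hr.le
  have hNR : (0:ℝ) < N := by exact_mod_cast (by omega : 0 < N)
  have h1r : (0:ℝ) < 1 + r := by linarith
  intro k
  induction k with
  | zero =>
    intro i j
    rw [pow_zero, Matrix.one_apply]
    have hi := i.isLt
    have hj := j.isLt
    rw [Ssum_orth N hN ((i:ℕ)+1) ((j:ℕ)+1) (by omega) (by omega) (by omega) (by omega)]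
    by_cases h : i = j
    · subst h
      rw [if_pos rfl, if_pos rfl, pow_zero]
      field_simp
    · rw [if_neg h, if_neg (by simp [Fin.ext_iff] at h ⊢; omega), pow_zero]
      ring
  | succ k IH =>
    intro i j
    rw [pow_succ, Matrix.mul_apply]
    have hj := j.isLt
    have hsplit : ∑ m : Fin (N-1), (Ar N r ^ k) i m * Ar N r m j
        = (∑ m : Fin (N-1), if (m:ℕ)+1 = (j:ℕ) then (Ar N r ^ k) i m * (r/(1+r)) else 0)
        + (∑ m : Fin (N-1), if (j:ℕ)+1 = (m:ℕ) then (Ar N r ^ k) i m * (1/(1+r)) else 0) := by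
      rw [← Finset.sum_add_distrib]
      apply Finset.sum_congr rfl
      intro m _
      unfold Ar
      by_cases h1 : (m:ℕ)+1 = (j:ℕ) <;> by_cases h2 : (j:ℕ)+1 = (m:ℕ)
      · omega
      · simp [h1, h2]
      · simp [h1, h2]
      · simp [h1, h2]
    rw [hsplit]
    have e1 : (∑ m : Fin (N-1), if (m:ℕ)+1 = (j:ℕ) then (Ar N r ^ k) i m * (r/(1+r)) else 0)
        = if hj0 : 0 < (j:ℕ) then
            (Ar N r ^ k) i ⟨(j:ℕ)-1, by omega⟩ * (r/(1+r)) else 0 := by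
      by_cases hj0 : 0 < (j:ℕ)
      · rw [dif_pos hj0]
        rw [Finset.sum_eq_single (⟨(j:ℕ)-1, by omega⟩ : Fin (N-1))]
        · rw [if_pos (by simp; omega)]
        · intro m _ hm
          rw [if_neg]
          intro hc
          exact hm (by apply Fin.ext; simp; omega)
        · intro h; exact absurd (Finset.mem_univ _) h
      · rw [dif_neg hj0]
        apply Finset.sum_eq_zero
        intro m _
        rw [if_neg (by omega)]
    have e2 : (∑ m : Fin (N-1), if (j:ℕ)+1 = (m:ℕ) then (Ar N r ^ k) i m * (1/(1+r)) else 0)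
        = if hj1 : (j:ℕ)+1 < N-1 then
            (Ar N r ^ k) i ⟨(j:ℕ)+1, by omega⟩ * (1/(1+r)) else 0 := by
      by_cases hj1 : (j:ℕ)+1 < N-1
      · rw [dif_pos hj1]
        rw [Finset.sum_eq_single (⟨(j:ℕ)+1, by omega⟩ : Fin (N-1))]
        · rw [if_pos (by simp)]
        · intro m _ hm
          rw [if_neg]
          intro hc
          exact hm (by apply Fin.ext; simp; omega)
        · intro h; exact absurd (Finset.mem_univ _) h
      · rw [dif_neg hj1]
        apply Finset.sum_eq_zero
        intro m _
        have := m.isLt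
        rw [if_neg (by omega)]
    rw [e1, e2]
    set s := Real.sqrt r with hsdef
    have h1' : (if hj0 : 0 < (j:ℕ) then
            (Ar N r ^ k) i ⟨(j:ℕ)-1, by omega⟩ * (r/(1+r)) else 0)
        = s ^ (j:ℕ) / s ^ (i:ℕ) * (2*s/(1+r))^k * (2 / N * Ssum N k ((i:ℕ)+1) (j:ℕ))
            * (s/(1+r)) := by
      by_cases hj0 : 0 < (j:ℕ)
      · rw [dif_pos hj0, IH i ⟨(j:ℕ)-1, by omega⟩]
        have hidx : ((⟨(j:ℕ)-1, by omega⟩ : Fin (N-1)) : ℕ) + 1 = (j:ℕ) := by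
          simp; omega
        rw [hidx]
        have hpow : s ^ ((j:ℕ)-1) * r = s ^ (j:ℕ) * s := by
          have h' : s ^ (j:ℕ) = s ^ ((j:ℕ)-1) * s := by
            rw [← pow_succ]; congr 1; omega
          rw [← hss, h']; ring
        show s ^ ((j:ℕ)-1) / s ^ (i:ℕ) * (2*s/(1+r))^k *
            (2 / N * Ssum N k ((i:ℕ)+1) (j:ℕ)) * (r/(1+r)) = _
        linear_combination ((2*s/(1+r))^k * (2 / N * Ssum N k ((i:ℕ)+1) (j:ℕ)) /
          s ^ (i:ℕ) / (1+r)) * hpow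
      · rw [dif_neg hj0]
        have : (j:ℕ) = 0 := by omega
        rw [this, Ssum_zero_right]
        ring
    have h2' : (if hj1 : (j:ℕ)+1 < N-1 then
            (Ar N r ^ k) i ⟨(j:ℕ)+1, by omega⟩ * (1/(1+r)) else 0)
        = s ^ (j:ℕ) / s ^ (i:ℕ) * (2*s/(1+r))^k * (2 / N * Ssum N k ((i:ℕ)+1) ((j:ℕ)+2))
            * (s/(1+r)) := by
      by_cases hj1 : (j:ℕ)+1 < N-1
      · rw [dif_pos hj1, IH i ⟨(j:ℕ)+1, by omega⟩]
        have hidx : ((⟨(j:ℕ)+1, by omega⟩ : Fin (N-1)) : ℕ) + 1 = (j:ℕ) + 2 := by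
          simp
        rw [hidx]
        show s ^ ((j:ℕ)+1) / s ^ (i:ℕ) * (2*s/(1+r))^k *
            (2 / N * Ssum N k ((i:ℕ)+1) ((j:ℕ)+2)) * (1/(1+r)) = _
        rw [pow_succ]
        ring
      · rw [dif_neg hj1]
        have : (j:ℕ) + 2 = N := by omega
        rw [this, Ssum_N_right N k ((i:ℕ)+1) (by omega)]
        ring
    rw [h1', h2']
    have hrec := Ssum_rec N k ((i:ℕ)+1) (j:ℕ)
    rw [show (j:ℕ) + 1 + 1 = (j:ℕ) + 2 from rfl] at hrec
    rw [pow_succ]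
    linear_combination (s ^ (j:ℕ) / s ^ (i:ℕ) * (2*s/(1+r))^k * (s/(1+r)) * (2 / N)) * hrec

/-- For `N ≥ 2`, `r > 0` and `k ≥ 0`,
`(r/(1+r)) · (A(r)^k)_{1,N−1}
  = (r^{(N−1)/2}/N) · (2√r/(1+r))^{k+1} · ∑_{ℓ=1}^{N−1} (−1)^{ℓ+1} cos^k(ℓπ/N) sin²(ℓπ/N)`. -/
theorem stmt8 (N : ℕ) (hN : 2 ≤ N) (r : ℝ) (hr : 0 < r) (k : ℕ) :
    r / (1 + r) * (Ar N r ^ k) ⟨0, by omega⟩ ⟨N - 2, by omega⟩ =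
      r ^ (((N : ℝ) - 1) / 2) / N * (2 * Real.sqrt r / (1 + r)) ^ (k + 1) *
        ∑ ℓ ∈ Finset.Icc 1 (N - 1),
          (-1 : ℝ) ^ (ℓ + 1) * Real.cos (ℓ * Real.pi / N) ^ k *
            Real.sin (ℓ * Real.pi / N) ^ 2 := by
  have hs : 0 < Real.sqrt r := Real.sqrt_pos.mpr hr
  have hss : Real.sqrt r * Real.sqrt r = r := Real.mul_self_sqrt hr.le
  have hNR : (0:ℝ) < N := by exact_mod_cast (by omega : 0 < N)
  rw [powA N hN r hr k ⟨0, by omega⟩ ⟨N-2, by omega⟩]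
  set s := Real.sqrt r with hsdef
  have hi0 : ((⟨0, by omega⟩ : Fin (N-1)) : ℕ) = 0 := rfl
  have hjv : ((⟨N-2, by omega⟩ : Fin (N-1)) : ℕ) = N-2 := rfl
  rw [hi0, hjv, show (0:ℕ)+1 = 1 from rfl, show N-2+1 = N-1 from by omega]
  have hlast : Ssum N k 1 (N-1)
      = ∑ ℓ ∈ Finset.Icc 1 (N - 1),
          (-1 : ℝ) ^ (ℓ + 1) * Real.cos (ℓ * Real.pi / N) ^ k *
            Real.sin (ℓ * Real.pi / N) ^ 2 := by
    unfold Ssum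
    apply Finset.sum_congr rfl
    intro ℓ _
    have h1 : (((1:ℕ)):ℝ) * ((ℓ:ℝ) * π / N) = (ℓ:ℝ) * π / N := by
      push_cast; ring
    have h2 : (((N-1:ℕ)):ℝ) * ((ℓ:ℝ) * π / N) = (ℓ:ℝ) * π - (ℓ:ℝ) * π / N := by
      rw [Nat.cast_sub (by omega : 1 ≤ N), Nat.cast_one]
      field_simp
    rw [h1, h2, Real.sin_nat_mul_pi_sub]
    rw [pow_succ]
    ring
  rw [hlast]
  have e : r * s^(N-2) = s^(N-1) * s := by
    have h' : s^(N-1) = s^(N-2) * s := by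
      rw [← pow_succ]; congr 1; omega
    rw [← hss, h']; ring
  have hrpow : s ^ (N-1) = r ^ (((N:ℝ)-1)/2) := by
    rw [hsdef, Real.sqrt_eq_rpow, ← Real.rpow_natCast (r ^ ((1:ℝ)/2)) (N-1),
      ← Real.rpow_mul hr.le]
    congr 1
    rw [Nat.cast_sub (by omega : 1 ≤ N), Nat.cast_one]
    ring
  rw [← hrpow, pow_succ]
  linear_combination ((2*s/(1+r))^k * 2 / (1+r) / N *
    (∑ ℓ ∈ Finset.Icc 1 (N - 1),
          (-1 : ℝ) ^ (ℓ + 1) * Real.cos (ℓ * Real.pi / N) ^ k *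
            Real.sin (ℓ * Real.pi / N) ^ 2)) * e
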